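/- arXiv:2107.10392 — 2 statements merged into one kernel-verified Lean document; each statement's English description precedes it below -/
import Mathlib

section
/- Let $f : \mathbb{H} \to \mathbb{C}$ be a surjective holomorphic function that is automorphic for $\mathrm{SL}_2(\mathbb{Z})$ (i.e., $f(\gamma z) = f(z)$ for all $\gamma$) and nonconstant, and let $p : U \to \mathbb{C}$ be holomorphic on an open set $U \subset \mathbb{C}$ with $U \cap \mathbb{R} \neq \emptyset$. Assume every zero of $f - c$ is isolated for all $c$. Then the equation $f(z) = p(z)$ has infinitely many solutions $z \in U \cap \mathbb{H}$, and moreover $U \cap \mathbb{R}$ lies in the closure of the solution set. -/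
open Complex

lemma moebius_det_num (a b c d : ℤ) (h : a*d - b*c = 1) (z : ℂ) :
    ((a:ℂ)*z+b).im * ((c:ℂ)*z+d).re - ((a:ℂ)*z+b).re * ((c:ℂ)*z+d).im = z.im := by
  have h' : (a:ℝ)*d - b*c = 1 := by exact_mod_cast h
  simp [Complex.add_im, Complex.add_re, Complex.mul_im, Complex.mul_re]
  linear_combination z.im * h'

lemma moebius_im (a b c d : ℤ) (h : a*d - b*c = 1) (z : ℂ) :
    (((a:ℂ)*z+b)/((c:ℂ)*z+d)).im = z.im / Complex.normSq ((c:ℂ)*z+d) := by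
  rw [Complex.div_im, div_sub_div_same, moebius_det_num a b c d h z]

lemma moebius_shift (a b c d : ℤ) (h : a*d - b*c = 1) (z : ℂ)
    (hc : (c:ℂ) ≠ 0) (hden : ((c:ℂ)*z + d) ≠ 0) :
    ((a:ℂ)*z+b)/((c:ℂ)*z+d) - (a:ℂ)/(c:ℂ) = -1/((c:ℂ)*((c:ℂ)*z+d)) := by
  have h' : (a:ℂ)*d - b*c = 1 := by exact_mod_cast h
  rw [div_sub_div _ _ hden hc, div_eq_div_iff (mul_ne_zero hden hc) (mul_ne_zero hc hden)]
  linear_combination (-(c:ℂ)^2*z - (c:ℂ)*(d:ℂ)) * h'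

lemma exists_good_fraction (x : ℝ) (M : ℝ) :
    ∃ a b q d : ℤ, M < (q:ℝ) ∧ 0 < q ∧ a * d - b * q = 1 ∧ |(a:ℝ) - q * x| ≤ 2 := by
  obtain ⟨N, hN⟩ := exists_nat_ge M
  obtain ⟨qn, hqn, hqp⟩ := Nat.exists_infinite_primes (N + 1)
  set q : ℤ := (qn : ℤ) with hq
  have hqpos : 0 < q := Int.natCast_pos.mpr hqp.pos
  have hqM : M < (q : ℝ) := by
    have : (N : ℝ) < (qn : ℝ) := by exact_mod_cast Nat.lt_of_lt_of_le (Nat.lt_succ_self N) hqn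
    push_cast [hq]
    linarith
  have hqprime : Prime q := Nat.prime_iff_prime_int.mp hqp
  set n : ℤ := ⌊(q : ℝ) * x⌋ with hn
  set a : ℤ := if q ∣ n then n + 1 else n with ha
  have hnd : ¬ q ∣ a := by
    rw [ha]
    split_ifs with hdvd
    · intro hd1
      have : q ∣ 1 := by have := dvd_sub hd1 hdvd; simpa using this
      exact hqprime.not_unit (isUnit_of_dvd_one this)
    · exact hdvd
  obtain ⟨u, v, huv⟩ := (hqprime.coprime_iff_not_dvd.mpr hnd).symm
  refine ⟨a, -v, q, u, hqM, hqpos, by linear_combination huv, ?_⟩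
  have h1 : (n : ℝ) ≤ (q:ℝ) * x := Int.floor_le _
  have h2 : (q:ℝ) * x < n + 1 := Int.lt_floor_add_one _
  rw [ha]
  split_ifs
  · rw [abs_le]; push_cast; constructor <;> linarith
  · rw [abs_le]; constructor <;> linarith

set_option maxHeartbeats 1000000 in
/-- if `f` is holomorphic on the upper half-plane, surjective, automorphic
for `SL₂(ℤ)`, nonconstant, with isolated fibers, and `p` is holomorphic on an open set `U`
meeting `ℝ`, then `f(z) = p(z)` has infinitely many solutions in `U ∩ ℍ`, and `U ∩ ℝ` lies
in the closure of the solution set. -/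
theorem automorphic_equation_infinitely_many_solutions
    (f : ℂ → ℂ)
    (hf_holo : DifferentiableOn ℂ f {z : ℂ | 0 < z.im})
    (hf_surj : ∀ c : ℂ, ∃ z : ℂ, 0 < z.im ∧ f z = c)
    (hf_auto : ∀ a b c d : ℤ, a * d - b * c = 1 → ∀ z : ℂ, 0 < z.im →
      f (((a : ℂ) * z + b) / ((c : ℂ) * z + d)) = f z)
    (hf_nonconst : ∃ z w : ℂ, 0 < z.im ∧ 0 < w.im ∧ f z ≠ f w)
    (hf_isolated : ∀ c : ℂ, ∀ z : ℂ, 0 < z.im → f z = c →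
      ∃ ε > 0, ∀ w : ℂ, 0 < w.im → w ≠ z → ‖w - z‖ < ε → f w ≠ c)
    (U : Set ℂ) (hU_open : IsOpen U) (hU_real : ∃ x : ℝ, (x : ℂ) ∈ U)
    (p : ℂ → ℂ) (hp : DifferentiableOn ℂ p U) :
    {z : ℂ | z ∈ U ∧ 0 < z.im ∧ f z = p z}.Infinite ∧
    ∀ x : ℝ, (x : ℂ) ∈ U →
      (x : ℂ) ∈ closure {z : ℂ | z ∈ U ∧ 0 < z.im ∧ f z = p z} := by
  set S := {z : ℂ | z ∈ U ∧ 0 < z.im ∧ f z = p z} with hSdef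
  have hHopen : IsOpen {z : ℂ | 0 < z.im} := isOpen_lt continuous_const Complex.continuous_im
  have key : ∀ x : ℝ, (x : ℂ) ∈ U → ∀ ε > 0, ∃ w, w ∈ S ∧ dist w (x:ℂ) < ε := by
    intro x hx ε hε
    obtain ⟨δ₁, hδ₁pos, hδ₁⟩ := Metric.isOpen_iff.mp hU_open _ hx
    obtain ⟨z₀, hz₀im, hz₀f⟩ := hf_surj (p x)
    obtain ⟨ε₀, hε₀pos, hiso⟩ := hf_isolated (p x) z₀ hz₀im hz₀f
    set R : ℝ := min (ε₀ / 2) (z₀.im / 2) with hRdef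
    have hRpos : 0 < R := lt_min (by linarith) (by linarith)
    set r : ℝ := R / 2 with hrdef
    have hrpos : 0 < r := by positivity
    have hrR : r < R := by simp [hrdef]; linarith
    set dl : ℝ := z₀.im / 2 with hdldef
    have hdlpos : 0 < dl := by simp [hdldef]; linarith
    have him : ∀ w : ℂ, w ∈ Metric.closedBall z₀ R → dl ≤ w.im := by
      intro w hw
      have h1 : ‖w - z₀‖ ≤ R := by simpa [Metric.mem_closedBall, dist_eq_norm] using hw
      have h2 : |(w - z₀).im| ≤ ‖w - z₀‖ := Complex.abs_im_le_norm _
      have h3 : R ≤ z₀.im / 2 := min_le_right _ _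
      have h4 : |w.im - z₀.im| ≤ R := by
        have := h2.trans h1
        simpa [Complex.sub_im] using this
      have h5 := (abs_le.mp h4).1
      simp only [hdldef]
      linarith
    have hsubH : Metric.closedBall z₀ R ⊆ {z : ℂ | 0 < z.im} :=
      fun w hw => lt_of_lt_of_le hdlpos (him w hw)
    have hsubrR : Metric.closedBall z₀ r ⊆ Metric.closedBall z₀ R :=
      Metric.closedBall_subset_closedBall hrR.le
    have hsphr : Metric.sphere z₀ r ⊆ Metric.closedBall z₀ R :=
      (Metric.sphere_subset_closedBall).trans hsubrR
    -- minimum of ‖f - p x‖ on the sphere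
    have hsne : (Metric.sphere z₀ r).Nonempty := NormedSpace.sphere_nonempty.mpr hrpos.le
    have hcont : ContinuousOn (fun w => ‖f w - p x‖) (Metric.sphere z₀ r) :=
      (((hf_holo.continuousOn).mono (hsphr.trans hsubH)).sub continuousOn_const).norm
    obtain ⟨w₀, hw₀s, hw₀min⟩ := (isCompact_sphere z₀ r).exists_isMinOn hsne hcont
    set m : ℝ := ‖f w₀ - p x‖ with hmdef
    have hmpos : 0 < m := by
      have hw₀H : 0 < w₀.im := hsubH (hsphr hw₀s)
      have hne : w₀ ≠ z₀ := by
        intro h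
        rw [Metric.mem_sphere, h] at hw₀s
        simp at hw₀s
        exact absurd hw₀s hrpos.ne
      have hfw : f w₀ ≠ p x := by
        refine hiso w₀ hw₀H hne ?_
        rw [Metric.mem_sphere] at hw₀s
        rw [← dist_eq_norm, hw₀s]
        calc r < R := hrR
        _ ≤ ε₀ / 2 := min_le_left _ _
        _ < ε₀ := by linarith
      simpa [hmdef, norm_pos_iff, sub_ne_zero] using hfw
    have hmlb : ∀ w ∈ Metric.sphere z₀ r, m ≤ ‖f w - p x‖ := fun w hw => hw₀min hw
    -- continuity of p at x
    have hpc : ContinuousAt p x :=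
      (hp.continuousOn.continuousAt (hU_open.mem_nhds hx))
    obtain ⟨δ₂, hδ₂pos, hδ₂⟩ := Metric.continuousAt_iff.mp hpc (m/4) (by positivity)
    set δ : ℝ := min δ₁ (min δ₂ ε) with hδdef
    have hδpos : 0 < δ := lt_min hδ₁pos (lt_min hδ₂pos hε)
    have hδδ₂ : δ ≤ δ₂ := (min_le_right _ _).trans (min_le_left _ _)
    have hδε : δ ≤ ε := (min_le_right _ _).trans (min_le_right _ _)
    have hδδ₁ : δ ≤ δ₁ := min_le_left _ _
    -- choose the modular matrix
    obtain ⟨a, b, q, d, hqM, hqpos, hdet, hax⟩ :=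
      exists_good_fraction x (max (4/δ) (2/(δ*dl)))
    have hqR : (0:ℝ) < q := by exact_mod_cast hqpos
    have hq4 : 4/δ < (q:ℝ) := lt_of_le_of_lt (le_max_left _ _) hqM
    have hq2 : 2/(δ*dl) < (q:ℝ) := lt_of_le_of_lt (le_max_right _ _) hqM
    have h2q : 2 / (q:ℝ) < δ/2 := by
      rw [div_lt_iff₀ hqR]
      rw [div_lt_iff₀ hδpos] at hq4
      linarith
    have h1q : 1 / ((q:ℝ) * ((q:ℝ)*dl)) < δ/2 := by
      have hq1 : (1:ℝ) ≤ q := by exact_mod_cast hqpos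
      rw [div_lt_iff₀ (by positivity : (0:ℝ) < δ*dl)] at hq2
      rw [div_lt_iff₀ (by positivity : (0:ℝ) < (q:ℝ) * ((q:ℝ)*dl))]
      nlinarith [mul_pos (mul_pos hqR hdlpos) hδpos]
    set φ : ℂ → ℂ := fun z => ((a:ℂ)*z + b)/((q:ℂ)*z + d) with hφdef
    have hqC : ((q:ℤ):ℂ) ≠ 0 := by exact_mod_cast hqpos.ne'
    have hdenim : ∀ z : ℂ, (((q:ℤ):ℂ)*z + ((d:ℤ):ℂ)).im = (q:ℝ) * z.im := by
      intro z
      simp [Complex.add_im, Complex.mul_im]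
    have hden : ∀ z : ℂ, dl ≤ z.im →
        (((q:ℤ):ℂ)*z + ((d:ℤ):ℂ)) ≠ 0 ∧ (q:ℝ)*dl ≤ ‖((q:ℤ):ℂ)*z + ((d:ℤ):ℂ)‖ := by
      intro z hz
      have h1 : (q:ℝ)*dl ≤ |(((q:ℤ):ℂ)*z + ((d:ℤ):ℂ)).im| := by
        rw [hdenim z]
        have : (q:ℝ)*dl ≤ (q:ℝ) * z.im := by nlinarith
        exact this.trans (le_abs_self _)
      have h2 : |(((q:ℤ):ℂ)*z + ((d:ℤ):ℂ)).im| ≤ ‖((q:ℤ):ℂ)*z + ((d:ℤ):ℂ)‖ :=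
        Complex.abs_im_le_norm _
      have hpos : (0:ℝ) < (q:ℝ)*dl := by positivity
      constructor
      · intro h0
        rw [h0] at h1
        simp at h1
        nlinarith
      · linarith
    have hφim : ∀ z ∈ Metric.closedBall z₀ R, 0 < (φ z).im := by
      intro z hz
      have hzim := him z hz
      have hd0 := (hden z hzim).1
      rw [hφdef]
      simp only
      rw [moebius_im a b q d hdet z]
      have h1 : 0 < Complex.normSq (((q:ℤ):ℂ)*z + ((d:ℤ):ℂ)) := Complex.normSq_pos.mpr hd0
      have h2 : 0 < z.im := lt_of_lt_of_le hdlpos hzim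
      positivity
    have hφU : ∀ z ∈ Metric.closedBall z₀ R, φ z ∈ Metric.ball (x:ℂ) δ := by
      intro z hz
      have hzim := him z hz
      obtain ⟨hd0, hdlb⟩ := hden z hzim
      have hshift := moebius_shift a b q d hdet z hqC hd0
      have hn1 : ‖φ z - ((a:ℤ):ℂ)/((q:ℤ):ℂ)‖ ≤ 1/((q:ℝ) * ((q:ℝ)*dl)) := by
        rw [hφdef]
        simp only
        rw [hshift]
        rw [norm_div, norm_neg, norm_one, norm_mul]
        have hq : ‖((q:ℤ):ℂ)‖ = (q:ℝ) := by
          rw [show ((q:ℤ):ℂ) = (((q:ℤ):ℝ):ℂ) by push_cast; ring, Complex.norm_real,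
            Real.norm_eq_abs, abs_of_pos hqR]
        rw [hq]
        apply div_le_div_of_nonneg_left (by norm_num) (by positivity)
        exact mul_le_mul_of_nonneg_left hdlb hqR.le
      have hn2 : ‖((a:ℤ):ℂ)/((q:ℤ):ℂ) - (x:ℂ)‖ ≤ 2/(q:ℝ) := by
        have heq : ((a:ℤ):ℂ)/((q:ℤ):ℂ) - (x:ℂ) = ((((a:ℝ)/(q:ℝ) - x) : ℝ) : ℂ) := by
          push_cast
          ring
        rw [heq, Complex.norm_real, Real.norm_eq_abs]
        have heq2 : (a:ℝ)/(q:ℝ) - x = ((a:ℝ) - (q:ℝ)*x)/(q:ℝ) := by field_simp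
        rw [heq2, abs_div, abs_of_pos hqR]
        gcongr
      rw [Metric.mem_ball, dist_eq_norm]
      calc ‖φ z - (x:ℂ)‖ ≤ ‖φ z - ((a:ℤ):ℂ)/((q:ℤ):ℂ)‖ + ‖((a:ℤ):ℂ)/((q:ℤ):ℂ) - (x:ℂ)‖ :=
            norm_sub_le_norm_sub_add_norm_sub _ _ _
        _ ≤ 1/((q:ℝ) * ((q:ℝ)*dl)) + 2/(q:ℝ) := add_le_add hn1 hn2
        _ < δ/2 + δ/2 := add_lt_add h1q h2q
        _ = δ := by ring
    -- the pulled-back function h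
    set h : ℂ → ℂ := fun z => f z - p (φ z) with hhdef
    have hpnear : ∀ z ∈ Metric.closedBall z₀ R, ‖p (φ z) - p x‖ < m/4 := by
      intro z hz
      have := hδ₂ (show dist (φ z) (x:ℂ) < δ₂ from lt_of_lt_of_le (Metric.mem_ball.mp (hφU z hz)) hδδ₂)
      rwa [dist_eq_norm] at this
    have hφUU : ∀ z ∈ Metric.closedBall z₀ R, φ z ∈ U := by
      intro z hz
      exact hδ₁ (Metric.ball_subset_ball hδδ₁ (hφU z hz))
    have hhdiff : ∀ z ∈ Metric.closedBall z₀ R, DifferentiableAt ℂ h z := by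
      intro z hz
      have hzim := him z hz
      have hd0 := (hden z hzim).1
      have h1 : DifferentiableAt ℂ f z := hf_holo.differentiableAt (hHopen.mem_nhds (hsubH hz))
      have hφz : DifferentiableAt ℂ φ z := by
        apply DifferentiableAt.div
        · fun_prop
        · fun_prop
        · exact hd0
      have hpz : DifferentiableAt ℂ p (φ z) := hp.differentiableAt (hU_open.mem_nhds (hφUU z hz))
      exact h1.sub (hpz.comp z hφz)
    have hz₀R : z₀ ∈ Metric.closedBall z₀ R := Metric.mem_closedBall_self hRpos.le
    have hhz₀ : h z₀ = p x - p (φ z₀) := by rw [hhdef]; simp only; rw [hz₀f]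
    have hhz₀small : ‖h z₀‖ < m/4 := by
      rw [hhz₀, ← norm_neg]
      simpa using hpnear z₀ hz₀R
    have hsphlb : ∀ w ∈ Metric.sphere z₀ r, m/2 ≤ ‖h w - h z₀‖ := by
      intro w hw
      have hwR := hsphr hw
      have hA : m ≤ ‖f w - p x‖ := hmlb w hw
      have hB : ‖p (φ w) - p x‖ < m/4 := hpnear w hwR
      have hC : ‖p (φ z₀) - p x‖ < m/4 := hpnear z₀ hz₀R
      have heq : h w - h z₀ = (f w - p x) - (p (φ w) - p x) + (p (φ z₀) - p x) := by
        simp only [hhdef]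
        rw [hz₀f]
        ring
      rw [heq]
      have t1 : ‖(f w - p x) - (p (φ w) - p x)‖ ≥ ‖f w - p x‖ - ‖p (φ w) - p x‖ :=
        norm_sub_norm_le _ _
      have t2 : ‖(f w - p x) - (p (φ w) - p x)‖ ≤
          ‖(f w - p x) - (p (φ w) - p x) + (p (φ z₀) - p x)‖ + ‖p (φ z₀) - p x‖ := by
        have hnn := norm_add_le ((f w - p x) - (p (φ w) - p x) + (p (φ z₀) - p x)) (-(p (φ z₀) - p x))
        rw [add_neg_cancel_right, norm_neg] at hnn
        exact hnn
      linarith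
    have hdcc : DiffContOnCl ℂ h (Metric.ball z₀ r) := by
      constructor
      · intro z hz
        exact (hhdiff z (hsubrR (Metric.ball_subset_closedBall hz))).differentiableWithinAt
      · rw [closure_ball z₀ hrpos.ne']
        intro z hz
        exact (hhdiff z (hsubrR hz)).continuousAt.continuousWithinAt
    have hfreq : ∃ᶠ z in nhds z₀, h z ≠ h z₀ := by
      by_contra hcon
      have hev : ∀ᶠ z in nhds z₀, h z = h z₀ :=
        (Filter.not_frequently.mp hcon).mono (fun z hz => not_not.mp hz)
      have hdiffOn : DifferentiableOn ℂ h (Metric.ball z₀ R) := fun z hz =>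
        (hhdiff z (Metric.ball_subset_closedBall hz)).differentiableWithinAt
      have hana : AnalyticOnNhd ℂ h (Metric.ball z₀ R) :=
        hdiffOn.analyticOnNhd Metric.isOpen_ball
      have heq : Set.EqOn h (fun _ => h z₀) (Metric.ball z₀ R) :=
        hana.eqOn_of_preconnected_of_eventuallyEq analyticOnNhd_const
          (convex_ball z₀ R).isPreconnected (Metric.mem_ball_self hRpos) hev
      have hw₀R : w₀ ∈ Metric.ball z₀ R := by
        rw [Metric.mem_ball]
        rw [Metric.mem_sphere] at hw₀s
        rw [hw₀s]; exact hrR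
      have := hsphlb w₀ hw₀s
      rw [heq hw₀R] at this
      simp at this
      linarith
    have himg := hdcc.ball_subset_image_closedBall hrpos hsphlb hfreq
    have h0mem : (0:ℂ) ∈ Metric.ball (h z₀) (m/2/2) := by
      rw [Metric.mem_ball, dist_eq_norm, zero_sub, norm_neg]
      linarith
    obtain ⟨z, hzball, hz0⟩ := himg h0mem
    have hzR : z ∈ Metric.closedBall z₀ R := hsubrR hzball
    have hzim : 0 < z.im := hsubH hzR
    refine ⟨φ z, ⟨hφUU z hzR, hφim z hzR, ?_⟩, ?_⟩
    · have hauto : f (φ z) = f z := hf_auto a b q d hdet z hzim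
      have h0 : f z - p (φ z) = 0 := hz0
      rw [hauto]
      exact sub_eq_zero.mp h0
    · rw [dist_eq_norm]
      have := Metric.mem_ball.mp (hφU z hzR)
      rw [dist_eq_norm] at this
      linarith
  constructor
  · by_contra hfin
    rw [Set.not_infinite] at hfin
    obtain ⟨x, hx⟩ := hU_real
    have hmem : (x:ℂ) ∈ S := by
      have hcl : (x:ℂ) ∈ closure S := by
        rw [Metric.mem_closure_iff]
        intro ε hε
        obtain ⟨w, hwS, hwd⟩ := key x hx ε hε
        exact ⟨w, hwS, by rwa [dist_comm]⟩
      rwa [hfin.isClosed.closure_eq] at hcl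
    have : (0:ℝ) < 0 := by simpa using hmem.2.1
    exact lt_irrefl 0 this
  · intro x hx
    rw [Metric.mem_closure_iff]
    intro ε hε
    obtain ⟨w, hwS, hwd⟩ := key x hx ε hε
    exact ⟨w, hwS, by rwa [dist_comm]⟩
end

section
/- There exist infinitely many $z$ in the upper half-plane $\mathbb{H}$ satisfying $j(z) = \exp(z)$, where $j$ is the modular $j$-function. -/
open Complex Metric Set Filter Topology

noncomputable section

namespace JExpAux

lemma denom_im (Q Q' : ℝ) (z : ℂ) : ((Q:ℂ)*z + (Q':ℂ)).im = Q * z.im := by simp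

lemma denom_ne {Q Q' : ℝ} (hQ : 0 < Q) {z : ℂ} (hz : 0 < z.im) :
    ((Q:ℂ)*z + (Q':ℂ)) ≠ 0 := by
  intro h
  have h2 := denom_im Q Q' z
  rw [h] at h2
  simp only [Complex.zero_im] at h2
  nlinarith

lemma denom_norm_ge {Q Q' : ℝ} {z : ℂ} :
    Q * z.im ≤ ‖(Q:ℂ)*z + (Q':ℂ)‖ := by
  calc Q * z.im = ((Q:ℂ)*z + (Q':ℂ)).im := (denom_im Q Q' z).symm
  _ ≤ |((Q:ℂ)*z + (Q':ℂ)).im| := le_abs_self _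
  _ ≤ ‖(Q:ℂ)*z + (Q':ℂ)‖ := Complex.abs_im_le_norm _

lemma moeb_im {P P' Q Q' : ℝ} (hdet : P*Q' - P'*Q = 1) (hQ : 0 < Q) {z : ℂ} (hz : 0 < z.im) :
    (((P:ℂ)*z + (P':ℂ))/((Q:ℂ)*z + (Q':ℂ))).im
      = z.im / Complex.normSq ((Q:ℂ)*z + (Q':ℂ)) := by
  have hD := denom_ne hQ hz (Q := Q) (Q' := Q')
  have hn : Complex.normSq ((Q:ℂ)*z + (Q':ℂ)) ≠ 0 := by
    simpa [Complex.normSq_eq_zero] using hD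
  rw [Complex.div_im, div_sub_div_same]
  congr 1
  simp only [Complex.add_im, Complex.add_re, Complex.mul_im, Complex.mul_re,
    Complex.ofReal_re, Complex.ofReal_im]
  linear_combination z.im * hdet

lemma moeb_im_pos {P P' Q Q' : ℝ} (hdet : P*Q' - P'*Q = 1) (hQ : 0 < Q) {z : ℂ}
    (hz : 0 < z.im) :
    0 < (((P:ℂ)*z + (P':ℂ))/((Q:ℂ)*z + (Q':ℂ))).im := by
  rw [moeb_im hdet hQ hz]
  have hD := denom_ne hQ hz (Q := Q) (Q' := Q')
  have hpos : 0 < Complex.normSq ((Q:ℂ)*z + (Q':ℂ)) := Complex.normSq_pos.2 hD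
  positivity

lemma moeb_sub_center {P P' Q Q' : ℝ} (hdet : P*Q' - P'*Q = 1) (hQ : 0 < Q)
    {z : ℂ} (hz : 0 < z.im) :
    ((P:ℂ)*z + (P':ℂ))/((Q:ℂ)*z + (Q':ℂ)) - ((P:ℂ)/(Q:ℂ))
      = -(1/((Q:ℂ)*((Q:ℂ)*z + (Q':ℂ)))) := by
  have hD := denom_ne hQ hz (Q := Q) (Q' := Q')
  have hQ0 : (Q:ℂ) ≠ 0 := by exact_mod_cast hQ.ne'
  have hdetC : (P:ℂ)*(Q':ℂ) - (P':ℂ)*(Q:ℂ) = 1 := by exact_mod_cast hdet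
  rw [div_sub_div _ _ hD hQ0,
    show ((P:ℂ)*z + (P':ℂ))*(Q:ℂ) - ((Q:ℂ)*z + (Q':ℂ))*(P:ℂ) = -1 from by
      linear_combination -hdetC]
  rw [mul_comm ((Q:ℂ)*z + (Q':ℂ)) (Q:ℂ), neg_div]

lemma moeb_diff {P P' Q Q' : ℝ} (hdet : P*Q' - P'*Q = 1) (hQ : 0 < Q)
    {z w : ℂ} (hz : 0 < z.im) (hw : 0 < w.im) :
    ((P:ℂ)*z + (P':ℂ))/((Q:ℂ)*z + (Q':ℂ)) - ((P:ℂ)*w + (P':ℂ))/((Q:ℂ)*w + (Q':ℂ))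
      = (z - w)/(((Q:ℂ)*z + (Q':ℂ))*((Q:ℂ)*w + (Q':ℂ))) := by
  have hDz := denom_ne hQ hz (Q := Q) (Q' := Q')
  have hDw := denom_ne hQ hw (Q := Q) (Q' := Q')
  have hdetC : (P:ℂ)*(Q':ℂ) - (P':ℂ)*(Q:ℂ) = 1 := by exact_mod_cast hdet
  rw [div_sub_div _ _ hDz hDw]
  congr 1
  linear_combination (z - w) * hdetC

lemma moeb_center_bound {P P' Q Q' : ℝ} (hdet : P*Q' - P'*Q = 1) (hQ1 : 1 ≤ Q)
    {δ : ℝ} (hδ : 0 < δ) {z : ℂ} (hz : δ ≤ z.im) :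
    ‖((P:ℂ)*z + (P':ℂ))/((Q:ℂ)*z + (Q':ℂ)) - ((P:ℂ)/(Q:ℂ))‖ ≤ 1/(Q^2*δ) := by
  have hQ0 : 0 < Q := lt_of_lt_of_le one_pos hQ1
  have hzpos : 0 < z.im := hδ.trans_le hz
  rw [moeb_sub_center hdet hQ0 hzpos, norm_neg, norm_div, norm_one, norm_mul]
  have h1 : Q*δ ≤ ‖(Q:ℂ)*z + (Q':ℂ)‖ :=
    le_trans (by nlinarith) (denom_norm_ge (Q := Q) (Q' := Q') (z := z))
  have h2 : ‖(Q:ℂ)‖ = Q := by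
    rw [Complex.norm_real, Real.norm_eq_abs, abs_of_pos hQ0]
  rw [h2]
  have h3 : Q^2*δ ≤ Q * ‖(Q:ℂ)*z + (Q':ℂ)‖ := by nlinarith
  have h4 : 0 < Q^2*δ := by positivity
  exact one_div_le_one_div_of_le h4 h3

lemma moeb_diff_bound {P P' Q Q' : ℝ} (hdet : P*Q' - P'*Q = 1) (hQ1 : 1 ≤ Q)
    {δ : ℝ} (hδ : 0 < δ) {z w : ℂ} (hz : δ ≤ z.im) (hw : δ ≤ w.im) :
    ‖((P:ℂ)*z + (P':ℂ))/((Q:ℂ)*z + (Q':ℂ)) - ((P:ℂ)*w + (P':ℂ))/((Q:ℂ)*w + (Q':ℂ))‖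
      ≤ ‖z - w‖ / (Q^2*δ^2) := by
  have hQ0 : 0 < Q := lt_of_lt_of_le one_pos hQ1
  have hzpos : 0 < z.im := hδ.trans_le hz
  have hwpos : 0 < w.im := hδ.trans_le hw
  rw [moeb_diff hdet hQ0 hzpos hwpos, norm_div, norm_mul]
  have h1 : Q*δ ≤ ‖(Q:ℂ)*z + (Q':ℂ)‖ :=
    le_trans (by nlinarith) (denom_norm_ge (Q := Q) (Q' := Q') (z := z))
  have h2 : Q*δ ≤ ‖(Q:ℂ)*w + (Q':ℂ)‖ :=
    le_trans (by nlinarith) (denom_norm_ge (Q := Q) (Q' := Q') (z := w))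
  have h3 : Q^2*δ^2 ≤ ‖(Q:ℂ)*z + (Q':ℂ)‖ * ‖(Q:ℂ)*w + (Q':ℂ)‖ := by
    have h0 : (0:ℝ) ≤ Q*δ := by positivity
    have h5 := mul_le_mul h1 h2 h0 (h0.trans h1)
    nlinarith
  have h4 : 0 < Q^2*δ^2 := by positivity
  exact div_le_div_of_nonneg_left (norm_nonneg _) h4 h3

lemma exp_lip (x0 : ℝ) {a b : ℂ} (ha : a ∈ closedBall (x0:ℂ) 1) (hb : b ∈ closedBall (x0:ℂ) 1) :
    ‖Complex.exp a - Complex.exp b‖ ≤ Real.exp (x0+1) * ‖a - b‖ := by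
  have bound : ∀ z ∈ closedBall (x0:ℂ) 1, ‖Complex.exp z‖ ≤ Real.exp (x0+1) := by
    intro z hz
    rw [Complex.norm_exp]
    apply Real.exp_le_exp.2
    have h1 : ‖z - (x0:ℂ)‖ ≤ 1 := by
      rw [← dist_eq_norm]; exact mem_closedBall.1 hz
    have h2 : |(z - (x0:ℂ)).re| ≤ ‖z - (x0:ℂ)‖ := Complex.abs_re_le_norm _
    have h3 : (z - (x0:ℂ)).re = z.re - x0 := by simp
    rw [h3] at h2
    have h4 := abs_le.1 (h2.trans h1)
    linarith [h4.2]
  exact Convex.norm_image_sub_le_of_norm_hasDerivWithin_le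
    (fun z _ => (Complex.hasDerivAt_exp z).hasDerivWithinAt) bound
    (convex_closedBall _ _) hb ha

lemma countable_of_isolated {Z : Set ℂ} (h : ∀ z ∈ Z, ∀ᶠ w in 𝓝[≠] z, w ∉ Z) :
    Z.Countable := by
  have hdisc : DiscreteTopology Z := by
    rw [discreteTopology_subtype_iff]
    intro x hx
    have h1 : ∀ᶠ w in 𝓝[≠] x ⊓ 𝓟 Z, w ∉ Z := (h x hx).filter_mono inf_le_left
    have h2 : ∀ᶠ w in 𝓝[≠] x ⊓ 𝓟 Z, w ∈ Z :=
      Filter.eventually_inf_principal.2 (Filter.Eventually.of_forall fun w hw => hw)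
    rw [← Filter.empty_mem_iff_bot]
    filter_upwards [h1, h2] with w hw1 hw2
    exact hw1 hw2
  have hsep : TopologicalSpace.SeparableSpace Z :=
    TopologicalSpace.SecondCountableTopology.to_separableSpace
  rw [← Set.countable_coe_iff]
  exact (TopologicalSpace.separableSpace_iff_countable).1 hsep

lemma exists_x0 {V : Set ℂ} (hV : V.Countable) :
    ∃ x0 : ℝ, 1/3 ≤ x0 ∧ x0 ≤ 1/2 ∧ Complex.exp (x0:ℂ) ∉ V := by
  by_contra hcon
  push_neg at hcon
  have hinj : Function.Injective (fun x : ℝ => Complex.exp (x:ℂ)) := by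
    intro a b hab
    have : Real.exp a = Real.exp b := by
      have h1 := congrArg (fun w : ℂ => ‖w‖) hab
      simpa [Complex.norm_exp] using h1
    exact Real.exp_injective this
  have hsub : Set.Icc (1/3:ℝ) (1/2) ⊆ (fun x : ℝ => Complex.exp (x:ℂ)) ⁻¹' V :=
    fun x hx => hcon x hx.1 hx.2
  have hc : (Set.Icc (1/3:ℝ) (1/2)).Countable := (hV.preimage hinj).mono hsub
  have hm := hc.measure_zero MeasureTheory.volume
  rw [Real.volume_Icc] at hm
  norm_num at hm

end JExpAux

open JExpAux

set_option maxHeartbeats 2000000 in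
/-- there are infinitely many `z` in the upper half-plane with
`j(z) = exp(z)`. Since Mathlib does not yet have the modular `j`-function, it is
characterized here by its defining properties: it is holomorphic on `ℍ`, surjective onto
`ℂ`, its fibers are exactly the `SL₂(ℤ)`-orbits, and it is normalized by `j(i) = 1728`
and `j(e^{2πi/3}) = 0` (these properties determine `j` uniquely). -/
theorem j_eq_exp_infinitely_many_solutions
    (j : ℂ → ℂ)
    (hj_holo : DifferentiableOn ℂ j {z : ℂ | 0 < z.im})
    (hj_surj : ∀ c : ℂ, ∃ z : ℂ, 0 < z.im ∧ j z = c)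
    (hj_fibers : ∀ z w : ℂ, 0 < z.im → 0 < w.im →
      (j z = j w ↔ ∃ a b c d : ℤ, a * d - b * c = 1 ∧
        w = (((a : ℂ) * z + b) / ((c : ℂ) * z + d))))
    (hj_i : j Complex.I = 1728)
    (hj_rho : j (Complex.exp (2 * Real.pi * Complex.I / 3)) = 0) :
    {z : ℂ | 0 < z.im ∧ j z = Complex.exp z}.Infinite := by
  classical
  set H : Set ℂ := {z : ℂ | 0 < z.im} with hHdef
  have hHopen : IsOpen H := isOpen_lt continuous_const Complex.continuous_im
  have hA : AnalyticOnNhd ℂ j H := hj_holo.analyticOnNhd hHopen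
  have hdiffAt : ∀ z ∈ H, DifferentiableAt ℂ j z := fun z hz =>
    hj_holo.differentiableAt (hHopen.mem_nhds hz)
  have hAd : AnalyticOnNhd ℂ (deriv j) H := hA.deriv
  have hHconv : Convex ℝ H := convex_halfSpace_im_gt 0
  have hHpre : IsPreconnected H := hHconv.isPreconnected
  have hI : Complex.I ∈ H := by simp [hHdef]
  have hrhoH : Complex.exp (2 * Real.pi * Complex.I / 3) ∈ H := by
    show 0 < (Complex.exp (2 * Real.pi * Complex.I / 3)).im
    rw [Complex.exp_im]
    have h1 : (2 * (Real.pi:ℂ) * Complex.I / 3).re = 0 := by simp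
    have h2 : (2 * (Real.pi:ℂ) * Complex.I / 3).im = 2 * Real.pi / 3 := by simp
    rw [h1, h2]
    have hsin : 0 < Real.sin (2 * Real.pi / 3) :=
      Real.sin_pos_of_pos_of_lt_pi (by positivity) (by nlinarith [Real.pi_pos])
    positivity
  -- the derivative of `j` is not identically zero on `H`
  have hnotall : ¬ ∀ z ∈ H, deriv j z = 0 := by
    intro h0
    have hfd : ∀ x ∈ H, fderivWithin ℂ j H x = 0 := by
      intro x hx
      rw [fderivWithin_of_isOpen hHopen hx]
      have hd : HasFDerivAt j (ContinuousLinearMap.smulRight (1 : ℂ →L[ℂ] ℂ) (deriv j x)) x :=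
        (hdiffAt x hx).hasDerivAt.hasFDerivAt
      rw [hd.fderiv, h0 x hx]
      ext w
      simp
    have hconst : j Complex.I = j (Complex.exp (2 * Real.pi * Complex.I / 3)) :=
      hHconv.is_const_of_fderivWithin_eq_zero hj_holo hfd hI hrhoH
    rw [hj_i, hj_rho] at hconst
    norm_num at hconst
  -- zeros of `deriv j` are isolated in `H`
  have hiso : ∀ z ∈ H, ∀ᶠ w in 𝓝[≠] z, deriv j w ≠ 0 := by
    intro z hz
    rcases (hAd z hz).eventually_eq_zero_or_eventually_ne_zero with h | h
    · exfalso
      apply hnotall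
      intro w hw
      have heq : deriv j =ᶠ[𝓝 z] 0 := h.mono fun y hy => by simpa using hy
      exact hAd.eqOn_zero_of_preconnected_of_eventuallyEq_zero hHpre hz heq hw
    · exact h
  set Z : Set ℂ := {z | z ∈ H ∧ deriv j z = 0} with hZdef
  have hZc : Z.Countable := by
    apply countable_of_isolated
    intro z hz
    exact (hiso z hz.1).mono fun w hw hwZ => hw hwZ.2
  obtain ⟨x0, hx01, hx02, hx03⟩ := exists_x0 (hZc.image j)
  obtain ⟨z1, hz1H, hjz1⟩ := hj_surj (Complex.exp (x0:ℂ))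
  have hdz1 : deriv j z1 ≠ 0 := fun h0 => hx03 ⟨z1, ⟨hz1H, h0⟩, hjz1⟩
  set δ : ℝ := z1.im / 2 with hδdef
  have hz1im : 0 < z1.im := hz1H
  have hδ : 0 < δ := by positivity
  -- local inverse of `j` at `z1`
  obtain ⟨pse, hpse⟩ := hA z1 hz1H
  have hsd : HasStrictDerivAt j (deriv j z1) z1 := by
    have h1 := hpse.hasStrictDerivAt
    have h2 := h1.hasDerivAt.deriv
    rwa [← h2] at h1
  have hF := hsd.hasStrictFDerivAt_equiv hdz1
  set ψ : ℂ → ℂ := hF.localInverse j _ z1 with hψdef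
  have hψc : ψ (j z1) = z1 := hF.localInverse_apply_image
  have hri : ∀ᶠ y in 𝓝 (j z1), j (ψ y) = y := hF.eventually_right_inverse
  obtain ⟨K, t, ht, hlip⟩ := hF.to_localInverse.exists_lipschitzOnWith
  have hcont : ContinuousAt ψ (j z1) := hF.localInverse_continuousAt
  have hpre : ψ ⁻¹' (ball z1 δ) ∈ 𝓝 (j z1) :=
    hcont.preimage_mem_nhds (by rw [hψc]; exact ball_mem_nhds _ hδ)
  have hnb : {y | j (ψ y) = y} ∩ t ∩ ψ ⁻¹' (ball z1 δ) ∈ 𝓝 (j z1) :=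
    Filter.inter_mem (Filter.inter_mem hri ht) hpre
  obtain ⟨ε₀, hε₀, hsubball⟩ := Metric.mem_nhds_iff.1 hnb
  set Lexp : ℝ := Real.exp (x0 + 1) with hLexpdef
  have hLexp : 0 < Lexp := Real.exp_pos _
  set C1 : ℝ := 1/δ + 1 with hC1def
  have hC1 : 0 < C1 := by positivity
  have hKnn : (0:ℝ) ≤ (K:ℝ) := K.coe_nonneg
  -- the key approximation claim
  have key : ∀ ε : ℝ, 0 < ε → ∃ s : ℂ, (0 < s.im ∧ j s = Complex.exp s)
      ∧ dist s (x0:ℂ) < ε := by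
    intro ε hε
    obtain ⟨N, hN⟩ := exists_nat_gt
      (max (max C1 ((Lexp * C1 + 1)/ε₀)) (max (2*(K:ℝ)*Lexp/δ^2) (C1/ε)))
    obtain ⟨qn, hqnN, hqnprime⟩ := Nat.exists_infinite_primes (N+2)
    set Q : ℝ := (qn : ℝ) with hQdef
    have hQN : (N:ℝ) ≤ Q := by
      rw [hQdef]
      exact_mod_cast le_trans (Nat.le_add_right N 2) hqnN
    have hQbig : max (max C1 ((Lexp * C1 + 1)/ε₀)) (max (2*(K:ℝ)*Lexp/δ^2) (C1/ε)) < Q :=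
      hN.trans_le hQN
    have hQ2 : 2 ≤ qn := hqnprime.two_le
    have hQ1 : 1 ≤ Q := by
      rw [hQdef]; exact_mod_cast le_trans (by norm_num) hQ2
    have hQ0 : 0 < Q := lt_of_lt_of_le one_pos hQ1
    -- large-q consequences
    have hgt1 : C1 < Q := lt_of_le_of_lt (le_trans (le_max_left _ _) (le_max_left _ _)) hQbig
    have hgt2 : (Lexp * C1 + 1)/ε₀ < Q :=
      lt_of_le_of_lt (le_trans (le_max_right _ _) (le_max_left _ _)) hQbig
    have hgt3 : 2*(K:ℝ)*Lexp/δ^2 < Q :=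
      lt_of_le_of_lt (le_trans (le_max_left _ _) (le_max_right _ _)) hQbig
    have hgt4 : C1/ε < Q :=
      lt_of_le_of_lt (le_trans (le_max_right _ _) (le_max_right _ _)) hQbig
    have hQC1 : C1/Q ≤ 1 := by
      rw [div_le_one hQ0]; exact hgt1.le
    have hQeps0 : Lexp * (C1/Q) < ε₀ := by
      rw [div_lt_iff₀ hε₀] at hgt2
      rw [mul_div_assoc', div_lt_iff₀ hQ0]
      nlinarith
    have hQcontr : 2*(K:ℝ)*Lexp ≤ Q^2 * δ^2 := by
      rw [div_lt_iff₀ (by positivity : (0:ℝ) < δ^2)] at hgt3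
      have h5 : (0:ℝ) ≤ Q*δ^2*(Q-1) :=
        mul_nonneg (by positivity) (by linarith)
      nlinarith
    have hQeps : C1/Q < ε := by
      rw [div_lt_iff₀ hε] at hgt4
      rw [div_lt_iff₀ hQ0]
      nlinarith
    -- construct the matrix
    set pz : ℤ := round (Q * x0) with hpzdef
    have hround : |Q * x0 - (pz:ℝ)| ≤ 1/2 := abs_sub_round _
    have hnotdvd : ¬ ((qn:ℤ) ∣ pz) := by
      intro hdvd
      obtain ⟨m, hm⟩ := hdvd
      rw [hm] at hround
      push_cast at hround
      rw [← hQdef] at hround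
      have hQ2' : (2:ℝ) ≤ Q := by rw [hQdef]; exact_mod_cast hQ2
      have habs : Q * |(m:ℝ) - x0| ≤ 1/2 := by
        calc Q * |(m:ℝ) - x0| = |Q * ((m:ℝ) - x0)| := by rw [abs_mul, abs_of_pos hQ0]
        _ = |Q * x0 - Q * (m:ℝ)| := by rw [mul_sub, abs_sub_comm]
        _ ≤ 1/2 := hround
      have h4 : |x0 - (m:ℝ)| ≤ 1/4 := by
        rw [abs_sub_comm]
        nlinarith [abs_nonneg ((m:ℝ) - x0), hQ2', hQ0]
      rcases le_or_gt m 0 with hm0 | hm1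
      · have hm0' : (m:ℝ) ≤ 0 := by exact_mod_cast hm0
        have : 1/3 ≤ x0 - (m:ℝ) := by linarith
        have := le_abs_self (x0 - (m:ℝ))
        linarith
      · have hm1' : (1:ℝ) ≤ (m:ℝ) := by exact_mod_cast hm1
        have : x0 - (m:ℝ) ≤ -(1/2) := by linarith
        have := neg_abs_le (x0 - (m:ℝ))
        linarith
    have hgcd : IsCoprime pz (qn:ℤ) := by
      rw [Int.isCoprime_iff_gcd_eq_one]
      have hnd : ¬ qn ∣ pz.natAbs := fun hd => hnotdvd (Int.natCast_dvd.2 hd)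
      have hcop : Nat.Coprime qn pz.natAbs := (hqnprime.coprime_iff_not_dvd).2 hnd
      show Nat.gcd pz.natAbs (Int.natAbs (qn:ℤ)) = 1
      rw [Int.natAbs_natCast]
      exact Nat.Coprime.gcd_eq_one (Nat.Coprime.symm hcop)
    obtain ⟨u, v, huv⟩ := hgcd
    -- matrix (a b; c d) = (pz, -v; qn, u), determinant 1
    set P : ℝ := (pz:ℝ) with hPdef
    set P' : ℝ := ((-v : ℤ):ℝ) with hP'def
    set Q' : ℝ := ((u : ℤ):ℝ) with hQ'def
    have hdet : P * Q' - P' * Q = 1 := by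
      have h := congrArg (fun n : ℤ => (n:ℝ)) huv
      push_cast at h
      rw [hPdef, hP'def, hQ'def, hQdef]
      push_cast
      linear_combination h
    set γ : ℂ → ℂ := fun z => ((P:ℂ)*z + (P':ℂ))/((Q:ℂ)*z + (Q':ℂ)) with hγdef
    have him : ∀ z ∈ closedBall z1 δ, δ ≤ z.im := by
      intro z hz
      have h1 : ‖z - z1‖ ≤ δ := mem_closedBall_iff_norm.1 hz
      have h2 : |(z - z1).im| ≤ ‖z - z1‖ := Complex.abs_im_le_norm _
      have h3 : (z - z1).im = z.im - z1.im := by simp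
      rw [h3] at h2
      have h4 := abs_le.1 (h2.trans h1)
      rw [hδdef]
      linarith [h4.1]
    have hγx0 : ∀ z ∈ closedBall z1 δ, ‖γ z - (x0:ℂ)‖ ≤ C1 / Q := by
      intro z hz
      have himz := him z hz
      have h1 : ‖γ z - ((P:ℂ)/(Q:ℂ))‖ ≤ 1/(Q^2*δ) :=
        moeb_center_bound hdet hQ1 hδ himz
      have h2 : ‖((P:ℂ)/(Q:ℂ)) - (x0:ℂ)‖ ≤ 1/(2*Q) := by
        have hcast : ((P:ℂ)/(Q:ℂ) - (x0:ℂ)) = (((P/Q - x0 : ℝ)):ℂ) := by push_cast; ring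
        rw [hcast, Complex.norm_real, Real.norm_eq_abs]
        have : P/Q - x0 = -((Q * x0 - P)/Q) := by field_simp; ring
        rw [this, abs_neg, abs_div, abs_of_pos hQ0]
        rw [div_le_div_iff₀ hQ0 (by positivity : (0:ℝ) < 2*Q)]
        nlinarith [hround]
      have h3 : ‖γ z - (x0:ℂ)‖ ≤ 1/(Q^2*δ) + 1/(2*Q) := by
        calc ‖γ z - (x0:ℂ)‖ = ‖(γ z - ((P:ℂ)/(Q:ℂ))) + (((P:ℂ)/(Q:ℂ)) - (x0:ℂ))‖ := by
              ring_nf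
        _ ≤ ‖γ z - ((P:ℂ)/(Q:ℂ))‖ + ‖((P:ℂ)/(Q:ℂ)) - (x0:ℂ)‖ := norm_add_le _ _
        _ ≤ 1/(Q^2*δ) + 1/(2*Q) := add_le_add h1 h2
      have h5 : 1/(Q^2*δ) + 1/(2*Q) ≤ C1/Q := by
        rw [hC1def]
        have e1 : 1/(Q^2*δ) ≤ (1/δ)/Q := by
          rw [div_le_div_iff₀ (by positivity) hQ0]
          have hid : 1/δ*(Q^2*δ) = Q^2 := by field_simp
          nlinarith [hid]
        have e2 : 1/(2*Q) ≤ 1/Q := by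
          rw [div_le_div_iff₀ (by positivity) hQ0]
          nlinarith
        have e3 : (1/δ)/Q + 1/Q = (1/δ + 1)/Q := by ring
        linarith
      exact h3.trans h5
    have hexpγ : ∀ z ∈ closedBall z1 δ, Complex.exp (γ z) ∈ ball (j z1) ε₀ := by
      intro z hz
      rw [mem_ball, dist_eq_norm, hjz1]
      have hγmem : γ z ∈ closedBall (x0:ℂ) 1 := by
        rw [mem_closedBall, dist_eq_norm]
        exact (hγx0 z hz).trans hQC1
      have hx0mem : (x0:ℂ) ∈ closedBall (x0:ℂ) 1 := mem_closedBall_self (by norm_num)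
      calc ‖Complex.exp (γ z) - Complex.exp (x0:ℂ)‖
          ≤ Lexp * ‖γ z - (x0:ℂ)‖ := exp_lip x0 hγmem hx0mem
      _ ≤ Lexp * (C1/Q) := by
          apply mul_le_mul_of_nonneg_left (hγx0 z hz) hLexp.le
      _ < ε₀ := hQeps0
    set F : ℂ → ℂ := fun z => ψ (Complex.exp (γ z)) with hFdef
    have hmaps : MapsTo F (closedBall z1 δ) (closedBall z1 δ) := by
      intro z hz
      have h1 := hexpγ z hz
      have h2 := hsubball h1
      exact ball_subset_closedBall h2.2
    have hγmemball : ∀ z ∈ closedBall z1 δ, γ z ∈ closedBall (x0:ℂ) 1 := by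
      intro z hz
      rw [mem_closedBall, dist_eq_norm]
      exact (hγx0 z hz).trans hQC1
    have hcontr : ∀ z ∈ closedBall z1 δ, ∀ w ∈ closedBall z1 δ,
        dist (F z) (F w) ≤ (1/2) * dist z w := by
      intro z hz w hw
      have hz' := hsubball (hexpγ z hz)
      have hw' := hsubball (hexpγ w hw)
      have hd1 : dist (F z) (F w) ≤ (K:ℝ) * dist (Complex.exp (γ z)) (Complex.exp (γ w)) :=
        hlip.dist_le_mul _ hz'.1.2 _ hw'.1.2
      have hd2 : dist (Complex.exp (γ z)) (Complex.exp (γ w)) ≤ Lexp * dist (γ z) (γ w) := by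
        rw [dist_eq_norm, dist_eq_norm]
        exact exp_lip x0 (hγmemball z hz) (hγmemball w hw)
      have hd3 : dist (γ z) (γ w) ≤ dist z w / (Q^2*δ^2) := by
        rw [dist_eq_norm, dist_eq_norm]
        exact moeb_diff_bound hdet hQ1 hδ (him z hz) (him w hw)
      have hdnn : (0:ℝ) ≤ dist z w := dist_nonneg
      have hQδpos : (0:ℝ) < Q^2*δ^2 := by positivity
      calc dist (F z) (F w) ≤ (K:ℝ) * (Lexp * (dist z w / (Q^2*δ^2))) := by
            apply hd1.trans
            apply mul_le_mul_of_nonneg_left _ hKnn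
            exact hd2.trans (mul_le_mul_of_nonneg_left hd3 hLexp.le)
      _ ≤ (1/2) * dist z w := by
            have hre : (K:ℝ) * (Lexp * (dist z w / (Q^2*δ^2)))
                = ((K:ℝ)*Lexp/(Q^2*δ^2)) * dist z w := by ring
            rw [hre]
            apply mul_le_mul_of_nonneg_right _ hdnn
            rw [div_le_iff₀ hQδpos]
            linarith
    have hsc : IsComplete (closedBall z1 δ) := (isClosed_closedBall).isComplete
    have hlipF : ContractingWith (1/2 : NNReal) (hmaps.restrict F _ _) := by
      constructor
      · rw [← NNReal.coe_lt_coe]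
        norm_num
      · apply LipschitzWith.of_dist_le_mul
        rintro ⟨x, hx⟩ ⟨y, hy⟩
        have h := hcontr x hx y hy
        simp only [Subtype.dist_eq, MapsTo.val_restrict_apply]
        have hc : ((1/2 : NNReal) : ℝ) = 1/2 := by norm_num
        rw [hc]
        exact h
    obtain ⟨y, hyball, hyfix, -, -⟩ :=
      hlipF.exists_fixedPoint' hsc hmaps (mem_closedBall_self hδ.le) (edist_ne_top _ _)
    have hyim : 0 < y.im := lt_of_lt_of_le hδ (him y hyball)
    have hsim : 0 < (γ y).im := moeb_im_pos hdet hQ0 hyim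
    have hyfix' : ψ (Complex.exp (γ y)) = y := hyfix
    have hjinv : j y = j (γ y) := by
      apply (hj_fibers y (γ y) hyim hsim).mpr
      refine ⟨pz, -v, (qn:ℤ), u, ?_, ?_⟩
      · linear_combination huv
      · show γ y = _
        rw [hγdef]
        simp only []
        rw [hPdef, hP'def, hQ'def, hQdef]
        push_cast
        ring_nf
    have hjy : j y = Complex.exp (γ y) := by
      conv_lhs => rw [← hyfix']
      exact (hsubball (hexpγ y hyball)).1.1
    refine ⟨γ y, ⟨hsim, by rw [← hjinv, hjy]⟩, ?_⟩
    rw [dist_eq_norm]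
    exact lt_of_le_of_lt (hγx0 y hyball) hQeps
  -- conclude: the solution set has `x0` as accumulation point, hence is infinite
  by_contra hfin
  rw [Set.not_infinite] at hfin
  have hclosed : IsClosed {z : ℂ | 0 < z.im ∧ j z = Complex.exp z} := hfin.isClosed
  have hx0cl : (x0:ℂ) ∈ closure {z : ℂ | 0 < z.im ∧ j z = Complex.exp z} := by
    rw [Metric.mem_closure_iff]
    intro ε hε
    obtain ⟨s, hs, hd⟩ := key ε hε
    exact ⟨s, hs, by rwa [dist_comm]⟩
  rw [hclosed.closure_eq] at hx0cl
  have : (0:ℝ) < ((x0:ℂ)).im := hx0cl.1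
  simp at this
end
end
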